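/- Let (α,μ) ∈ D_M^↑ × D_ℝ^↑. A triple (ξ,β,ι) ∈ D_M × D_M^↑ × D_ℝ^↑ solves the MVSP for (α,μ) if and only if both of the following hold: (a) for every x ∈ [0,∞), the pair of functions (t ↦ ξ_t[0,x], t ↦ β_t((x,∞)) + ι(t)) equals Γ[t ↦ α_t[0,x] − μ(t)]; and (b) β_t({0}) = α_t({0}) − ξ_t({0}) for all t ≥ 0. -/

import Mathlib

open MeasureTheory Filter Set
open scoped NNReal ENNReal BoundedContinuousFunction Topology

noncomputable section

/-- Càdlàg on `[0,∞)`: right-continuous at every `t ≥ 0`, with left limits at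
every `t > 0` (along `[0,t)`). -/
def CadlagOn {E : Type*} [TopologicalSpace E] (f : ℝ → E) : Prop :=
  (∀ t : ℝ, 0 ≤ t → ContinuousWithinAt f (Set.Ici t) t) ∧
  (∀ t : ℝ, 0 < t → ∃ l : E, Filter.Tendsto f (nhdsWithin t (Set.Ico 0 t)) (nhds l))

/-- `D_ℝ`: real-valued càdlàg paths on `[0,∞)`. -/
def DR (f : ℝ → ℝ) : Prop := CadlagOn f

/-- `D_ℝ^↑`: nonnegative nondecreasing real-valued càdlàg paths on `[0,∞)`. -/
def DRup (f : ℝ → ℝ) : Prop :=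
  CadlagOn f ∧ (∀ t : ℝ, 0 ≤ t → 0 ≤ f t) ∧ MonotoneOn f (Set.Ici 0)

/-- `D_M`: càdlàg paths with values in the space of finite nonnegative measures
on `[0,∞)`, equipped with the topology of weak convergence. -/
def DM (ζ : ℝ → FiniteMeasure ℝ≥0) : Prop := CadlagOn ζ

/-- `D_M^↑`: paths in `D_M` such that `t ↦ ∫ f dζ_t` is nondecreasing for every
nonnegative bounded continuous `f` on `[0,∞)`. -/
def DMup (ζ : ℝ → FiniteMeasure ℝ≥0) : Prop :=
  CadlagOn ζ ∧
  ∀ f : ℝ≥0 →ᵇ ℝ≥0, MonotoneOn (fun t => (ζ t).testAgainstNN f) (Set.Ici 0)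

/-- First component of the Skorokhod map on the half-line:
`Γ₁[ψ](t) = ψ(t) − inf_{s∈[0,t]} (ψ(s) ∧ 0)`. -/
def Gamma1 (ψ : ℝ → ℝ) (t : ℝ) : ℝ :=
  ψ t - sInf ((fun s => min (ψ s) 0) '' Set.Icc 0 t)

/-- Second component of the Skorokhod map on the half-line: `Γ₂[ψ] = Γ₁[ψ] − ψ`. -/
def Gamma2 (ψ : ℝ → ℝ) (t : ℝ) : ℝ := Gamma1 ψ t - ψ t

/-- Extension of `g : [0,∞) → ℝ` by `0` on `(-∞,0)`. -/
def lsExt (g : ℝ → ℝ) : ℝ → ℝ := fun t => if t < 0 then 0 else g t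

/- The Lebesgue–Stieltjes measure `m^g(B) = g(0)δ₀(B) + ∫_{(0,∞)} 1_B dg` of a
nonnegative nondecreasing right-continuous `g` on `[0,∞)`, realized as the
Stieltjes measure of the extension of `g` by `0` on `(-∞,0)`. -/
open scoped Classical in
def lsMeasure (g : ℝ → ℝ) : Measure ℝ :=
  if h : Monotone (lsExt g) ∧ ∀ t, ContinuousWithinAt (lsExt g) (Set.Ici t) t then
    StieltjesFunction.measure ⟨lsExt g, h.1, h.2⟩
  else 0

/-- The measure-valued Skorokhod problem (MVSP): `(ξ,β,ι)` solves the MVSP for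
the data `(α,μ)`. -/
def SolvesMVSP (α : ℝ → FiniteMeasure ℝ≥0) (μ : ℝ → ℝ)
    (ξ β : ℝ → FiniteMeasure ℝ≥0) (ι : ℝ → ℝ) : Prop :=
  (∀ x : ℝ≥0, ∀ t : ℝ, 0 ≤ t →
    (ξ t (Set.Iic x) : ℝ) = (α t (Set.Iic x) : ℝ) - μ t + (β t (Set.Ioi x) : ℝ) + ι t) ∧
  (∀ x : ℝ≥0, ∀ᵐ t ∂(lsMeasure (fun s => (β s (Set.Ioi x) : ℝ))), (ξ t (Set.Iic x) : ℝ) = 0) ∧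
  (∀ x : ℝ≥0, ∀ᵐ t ∂(lsMeasure ι), (ξ t (Set.Iic x) : ℝ) = 0) ∧
  (∀ t : ℝ, 0 ≤ t → (β t Set.univ : ℝ) + ι t = μ t)

/-- System (30): `(ξ,β,ι)` solves the MVSP for `(α, μ+ρ)` and `ξ_t[0,t) = 0`
for every `t > 0`. -/
def Solves30 (α : ℝ → FiniteMeasure ℝ≥0) (μ : ℝ → ℝ)
    (ξ β : ℝ → FiniteMeasure ℝ≥0) (ι ρ : ℝ → ℝ) : Prop :=
  SolvesMVSP α (fun t => μ t + ρ t) ξ β ι ∧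
  ∀ t : ℝ, 0 < t → (ξ t (Set.Iio (Real.toNNReal t)) : ℝ) = 0

/-- A minimal solution of system (30): a solution (lying in the appropriate
path spaces) whose reneging function `ρ` is pointwise below that of any other
solution. -/
def IsMinimalSol30 (α : ℝ → FiniteMeasure ℝ≥0) (μ : ℝ → ℝ)
    (ξ β : ℝ → FiniteMeasure ℝ≥0) (ι ρ : ℝ → ℝ) : Prop :=
  (DM ξ ∧ DMup β ∧ DRup ι ∧ DRup ρ ∧ Solves30 α μ ξ β ι ρ) ∧
  ∀ (ξ' β' : ℝ → FiniteMeasure ℝ≥0) (ι' ρ' : ℝ → ℝ),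
    DM ξ' → DMup β' → DRup ι' → DRup ρ' → Solves30 α μ ξ' β' ι' ρ' →
    ∀ t : ℝ, 0 ≤ t → ρ t ≤ ρ' t

/-- The (topological) support of a finite measure on `[0,∞)`: the set of points
all of whose open neighborhoods have positive measure. -/
def measSupport (ν : FiniteMeasure ℝ≥0) : Set ℝ≥0 :=
  {x : ℝ≥0 | ∀ u : Set ℝ≥0, IsOpen u → x ∈ u → ν u ≠ 0}

/-- `σ(ν) = inf supp[ν]`, with value `∞` when `ν = 0`. -/
def sigmaOf (ν : FiniteMeasure ℝ≥0) : ℝ≥0∞ :=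
  sInf ((fun x : ℝ≥0 => (x : ℝ≥0∞)) '' measSupport ν)

/-- Assumption A on the data `(α,μ)`. -/
def AssumptionA (α : ℝ → FiniteMeasure ℝ≥0) (μ : ℝ → ℝ) : Prop :=
  (∃ (ξ0 : FiniteMeasure ℝ≥0) (a0 : ℝ → FiniteMeasure ℝ≥0)
      (lam : ℝ → ℝ) (ν : FiniteMeasure ℝ≥0),
    (∀ x : ℝ≥0, ξ0 {x} = 0) ∧
    ContinuousOn a0 (Set.Ici 0) ∧ DMup a0 ∧
    (∀ t : ℝ, 0 ≤ t → ∀ x : ℝ≥0, a0 t {x} = 0) ∧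
    Measurable lam ∧ (∀ s : ℝ, 0 ≤ s → 0 ≤ lam s) ∧
    (∀ t : ℝ, 0 ≤ t → α t = a0 t + ξ0) ∧
    (∀ t : ℝ, 0 ≤ t → ∀ x : ℝ≥0, (a0 t (Set.Iic x) : ℝ) =
      ∫ s in Set.Icc (0:ℝ) t,
        (if s ≤ (x:ℝ) then lam s * (ν (Set.Iic (Real.toNNReal ((x:ℝ) - s))) : ℝ) else 0)) ∧
    (∀ t : ℝ, 0 ≤ t →
      Filter.Tendsto (fun x : ℝ≥0 =>
          sSup ((fun s => lam s * (ν (Set.Iic x) : ℝ)) '' Set.Icc (0:ℝ) t))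
        (nhdsWithin 0 (Set.Ioi 0)) (nhds 0))) ∧
  (∃ μ0 m : ℝ → ℝ,
    ContinuousOn μ0 (Set.Ici 0) ∧ (∀ t : ℝ, 0 ≤ t → 0 ≤ μ0 t) ∧
    MonotoneOn μ0 (Set.Ici 0) ∧
    Measurable m ∧ (∀ s : ℝ, 0 ≤ s → 0 ≤ m s) ∧
    (∀ t : ℝ, 0 ≤ t → MeasureTheory.IntegrableOn m (Set.Icc 0 t)) ∧
    (∀ t : ℝ, 0 ≤ t → 0 < sInf (m '' Set.Icc (0:ℝ) t)) ∧
    (∀ t : ℝ, 0 ≤ t → μ t = μ0 t + ∫ s in Set.Icc (0:ℝ) t, m s))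

namespace MVSPAux

open Set Filter MeasureTheory Function

lemma lsExt_of_nonneg (g : ℝ → ℝ) {t : ℝ} (ht : 0 ≤ t) : lsExt g t = g t :=
  if_neg (not_lt.2 ht)

lemma lsExt_of_neg (g : ℝ → ℝ) {t : ℝ} (ht : t < 0) : lsExt g t = 0 := if_pos ht

/-- A function on `[0,∞)` whose extension by zero is a Stieltjes function. -/
def Nice (g : ℝ → ℝ) : Prop :=
  Monotone (lsExt g) ∧ ∀ t, ContinuousWithinAt (lsExt g) (Set.Ici t) t

/-- The Stieltjes function associated to a nice `g`. -/
def Nice.stj {g : ℝ → ℝ} (h : Nice g) : StieltjesFunction ℝ := ⟨lsExt g, h.1, h.2⟩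

lemma Nice.stj_coe {g : ℝ → ℝ} (h : Nice g) : (h.stj : ℝ → ℝ) = lsExt g := rfl

lemma lsMeasure_eq {g : ℝ → ℝ} (h : Nice g) : lsMeasure g = h.stj.measure := by
  rw [lsMeasure]; exact dif_pos h

lemma nice_of (g : ℝ → ℝ) (h0 : ∀ t, 0 ≤ t → 0 ≤ g t) (hm : MonotoneOn g (Set.Ici 0))
    (hrc : ∀ t, 0 ≤ t → ContinuousWithinAt g (Set.Ici t) t) : Nice g := by
  constructor
  · intro a b hab
    rcases lt_or_ge b 0 with hb | hb
    · rw [lsExt_of_neg g (lt_of_le_of_lt hab hb), lsExt_of_neg g hb]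
    rcases lt_or_ge a 0 with ha | ha
    · rw [lsExt_of_neg g ha, lsExt_of_nonneg g hb]; exact h0 b hb
    · rw [lsExt_of_nonneg g ha, lsExt_of_nonneg g hb]; exact hm ha hb hab
  · intro t
    rcases lt_or_ge t 0 with ht | ht
    · have hev : ∀ᶠ s in nhdsWithin t (Set.Ici t), lsExt g s = 0 := by
        filter_upwards [(eventually_lt_nhds ht).filter_mono nhdsWithin_le_nhds] with s hs
        exact lsExt_of_neg g hs
      have h0' : lsExt g t = 0 := lsExt_of_neg g ht
      unfold ContinuousWithinAt
      rw [h0']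
      exact Tendsto.congr' (by filter_upwards [hev] with s hs using hs.symm) tendsto_const_nhds
    · exact (hrc t ht).congr (fun s hs => lsExt_of_nonneg g (le_trans ht hs))
        (lsExt_of_nonneg g ht)

lemma Nice.nonneg {g : ℝ → ℝ} (h : Nice g) {t : ℝ} (ht : 0 ≤ t) : 0 ≤ g t := by
  have h2 := h.1 (show (-1:ℝ) ≤ t by linarith)
  rwa [lsExt_of_neg g (by norm_num), lsExt_of_nonneg g ht] at h2

lemma Nice.monoOn {g : ℝ → ℝ} (h : Nice g) : MonotoneOn g (Set.Ici 0) := by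
  intro a ha b hb hab
  have h2 := h.1 hab
  rwa [lsExt_of_nonneg g ha, lsExt_of_nonneg g hb] at h2

lemma Nice.leftLim_of_nonpos {g : ℝ → ℝ} (h : Nice g) {u : ℝ} (hu : u ≤ 0) :
    Function.leftLim (lsExt g) u = 0 := by
  apply leftLim_eq_of_tendsto (f := lsExt g)
  apply Tendsto.congr' _ tendsto_const_nhds
  filter_upwards [self_mem_nhdsWithin] with s hs
  exact (lsExt_of_neg g (lt_of_lt_of_le hs hu)).symm

lemma Nice.measure_Iic' {g : ℝ → ℝ} (h : Nice g) (x : ℝ) :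
    h.stj.measure (Set.Iic x) = ENNReal.ofReal (lsExt g x) := by
  have hbot : Tendsto (lsExt g) atBot (𝓝 0) := by
    apply Tendsto.congr' _ tendsto_const_nhds
    filter_upwards [eventually_lt_atBot 0] with s hs
    exact (lsExt_of_neg g hs).symm
  simpa [Nice.stj_coe] using h.stj.measure_Iic hbot x

lemma Nice.measure_Iio_zero {g : ℝ → ℝ} (h : Nice g) : h.stj.measure (Set.Iio 0) = 0 := by
  have hsub : Set.Iio (0:ℝ) ⊆ ⋃ n : ℕ, Set.Iic (-(1:ℝ)/(n+1)) := by
    intro y hy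
    simp only [Set.mem_Iio] at hy
    obtain ⟨n, hn⟩ := exists_nat_gt ((-y)⁻¹)
    have hy' : (0:ℝ) < -y := by linarith
    refine Set.mem_iUnion.2 ⟨n, ?_⟩
    simp only [Set.mem_Iic]
    have h2 : (-y)⁻¹ < (n:ℝ) + 1 := by linarith
    have h3 : 1 < -y * ((n:ℝ)+1) := by
      have := (inv_lt_iff_one_lt_mul₀ hy').1 h2
      linarith
    have h4 : (1:ℝ)/((n:ℝ)+1) ≤ -y := by
      rw [div_le_iff₀ (by positivity)]
      nlinarith
    have h5 : -(1:ℝ)/((n:ℝ)+1) = -((1:ℝ)/((n:ℝ)+1)) := by ring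
    rw [h5]
    linarith
  refine measure_mono_null hsub ?_
  refine measure_iUnion_null fun n => ?_
  rw [h.measure_Iic', lsExt_of_neg g (div_neg_of_neg_of_pos (by norm_num) (by positivity))]
  simp

end MVSPAux
namespace MVSPAux

open Set Filter MeasureTheory Function

lemma Nice.measure_singleton' {g : ℝ → ℝ} (h : Nice g) (a : ℝ) :
    h.stj.measure {a} = ENNReal.ofReal (lsExt g a - Function.leftLim (lsExt g) a) :=
  h.stj.measure_singleton a

lemma Nice.measure_Ioc' {g : ℝ → ℝ} (h : Nice g) (a b : ℝ) :
    h.stj.measure (Set.Ioc a b) = ENNReal.ofReal (lsExt g b - lsExt g a) :=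
  h.stj.measure_Ioc a b

lemma lsExt_add (f g : ℝ → ℝ) :
    lsExt (fun t => f t + g t) = fun t => lsExt f t + lsExt g t := by
  funext t; by_cases ht : t < 0 <;> simp [lsExt, ht]

lemma Nice.add {f g : ℝ → ℝ} (hf : Nice f) (hg : Nice g) : Nice (fun t => f t + g t) := by
  constructor
  · rw [lsExt_add]; exact hf.1.add hg.1
  · intro t; rw [lsExt_add]; exact (hf.2 t).add (hg.2 t)

lemma lsMeasure_add {f g : ℝ → ℝ} (hf : Nice f) (hg : Nice g) :
    lsMeasure (fun t => f t + g t) = lsMeasure f + lsMeasure g := by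
  have hfg : Nice (fun t => f t + g t) := hf.add hg
  rw [lsMeasure_eq hf, lsMeasure_eq hg, lsMeasure_eq hfg]
  refine MeasureTheory.Measure.ext_of_Ioc' _ _ (fun a b hab => ?_) (fun a b hab => ?_)
  · rw [hfg.measure_Ioc']; exact ENNReal.ofReal_ne_top
  · rw [Measure.add_apply, hfg.measure_Ioc', hf.measure_Ioc', hg.measure_Ioc']
    have h1 : lsExt f a ≤ lsExt f b := hf.1 hab.le
    have h2 : lsExt g a ≤ lsExt g b := hg.1 hab.le
    have e : ∀ t : ℝ, lsExt (fun t => f t + g t) t = lsExt f t + lsExt g t :=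
      fun t => congrFun (lsExt_add f g) t
    rw [e, e, ← ENNReal.ofReal_add (by linarith) (by linarith)]
    congr 1; ring

lemma fm_coe_le {ν₁ ν₂ : FiniteMeasure ℝ≥0} {B : Set ℝ≥0}
    (h : (ν₁ : Measure ℝ≥0) B ≤ (ν₂ : Measure ℝ≥0) B) : ((ν₁ B : ℝ≥0) : ℝ) ≤ ν₂ B := by
  rw [NNReal.coe_le_coe, ← ENNReal.coe_le_coe,
    FiniteMeasure.ennreal_coeFn_eq_coeFn_toMeasure, FiniteMeasure.ennreal_coeFn_eq_coeFn_toMeasure]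
  exact h

lemma fm_union (ν : FiniteMeasure ℝ≥0) {s u : Set ℝ≥0} (hd : Disjoint s u)
    (hu : MeasurableSet u) : ((ν (s ∪ u) : ℝ≥0) : ℝ) = ν s + ν u := by
  have h : (ν (s ∪ u) : ℝ≥0∞) = ((ν s + ν u : ℝ≥0) : ℝ≥0∞) := by
    rw [ENNReal.coe_add, FiniteMeasure.ennreal_coeFn_eq_coeFn_toMeasure,
      FiniteMeasure.ennreal_coeFn_eq_coeFn_toMeasure,
      FiniteMeasure.ennreal_coeFn_eq_coeFn_toMeasure]
    exact measure_union hd hu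
  have h2 : ν (s ∪ u) = ν s + ν u := by exact_mod_cast h
  rw [h2]; push_cast; ring

lemma mono_closed {ζ : ℝ → FiniteMeasure ℝ≥0} (hζ : DMup ζ) {s t : ℝ} (hs : 0 ≤ s)
    (hst : s ≤ t) {F : Set ℝ≥0} (hF : IsClosed F) :
    (ζ s : Measure ℝ≥0) F ≤ (ζ t : Measure ℝ≥0) F := by
  have h1 := HasOuterApproxClosed.tendsto_lintegral_apprSeq hF (ζ s : Measure ℝ≥0)
  have h2 := HasOuterApproxClosed.tendsto_lintegral_apprSeq hF (ζ t : Measure ℝ≥0)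
  refine le_of_tendsto_of_tendsto' h1 h2 (fun n => ?_)
  have h3 := hζ.2 (hF.apprSeq n) (Set.mem_Ici.2 hs) (Set.mem_Ici.2 (le_trans hs hst)) hst
  rw [← FiniteMeasure.testAgainstNN_coe_eq, ← FiniteMeasure.testAgainstNN_coe_eq]
  exact_mod_cast h3

lemma mono_Ioi {ζ : ℝ → FiniteMeasure ℝ≥0} (hζ : DMup ζ) {s t : ℝ} (hs : 0 ≤ s)
    (hst : s ≤ t) (x : ℝ≥0) :
    (ζ s : Measure ℝ≥0) (Set.Ioi x) ≤ (ζ t : Measure ℝ≥0) (Set.Ioi x) := by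
  have hU : Set.Ioi x = ⋃ n : ℕ, Set.Ici (x + ((n:ℝ≥0)+1)⁻¹) := by
    ext y
    simp only [Set.mem_Ioi, Set.mem_iUnion, Set.mem_Ici]
    constructor
    · intro hy
      obtain ⟨n, hn⟩ := exists_nat_gt (((y:ℝ) - x)⁻¹)
      have hyx : (0:ℝ) < (y:ℝ) - x := by
        have := (NNReal.coe_lt_coe).2 hy; linarith
      refine ⟨n, ?_⟩
      rw [← NNReal.coe_le_coe]
      push_cast
      have h1 : ((y:ℝ) - x)⁻¹ < (n:ℝ) + 1 := by linarith
      have h2 : 1 < ((y:ℝ) - x) * ((n:ℝ)+1) := by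
        have := (inv_lt_iff_one_lt_mul₀ hyx).1 h1
        linarith
      have h3 : ((n:ℝ)+1)⁻¹ ≤ (y:ℝ) - x := by
        rw [inv_eq_one_div, div_le_iff₀ (by positivity)]
        nlinarith
      linarith
    · rintro ⟨n, hn⟩
      exact lt_of_lt_of_le (lt_add_of_pos_right x (by positivity)) hn
  have hmono : Monotone (fun n : ℕ => Set.Ici (x + ((n:ℝ≥0)+1)⁻¹)) := by
    intro n m hnm
    apply Set.Ici_subset_Ici.2
    have : ((m:ℝ≥0)+1)⁻¹ ≤ ((n:ℝ≥0)+1)⁻¹ := by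
      apply inv_anti₀ (by positivity)
      exact add_le_add_left (by exact_mod_cast hnm) 1
    exact add_le_add_right this x
  rw [hU, hmono.measure_iUnion, hmono.measure_iUnion]
  exact iSup_mono fun n => mono_closed hζ hs hst isClosed_Ici

lemma rc_apply {ζ : ℝ → FiniteMeasure ℝ≥0} (hζ : DMup ζ) {t : ℝ} (ht : 0 ≤ t)
    {B : Set ℝ≥0} (hBm : MeasurableSet B)
    (hm : ∀ ⦃s u : ℝ⦄, 0 ≤ s → s ≤ u → (ζ s : Measure ℝ≥0) B ≤ (ζ u : Measure ℝ≥0) B)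
    (hmc : ∀ ⦃s u : ℝ⦄, 0 ≤ s → s ≤ u → (ζ s : Measure ℝ≥0) Bᶜ ≤ (ζ u : Measure ℝ≥0) Bᶜ) :
    ContinuousWithinAt (fun s => ((ζ s B : ℝ≥0) : ℝ)) (Set.Ici t) t := by
  have h1 : Tendsto ζ (nhdsWithin t (Set.Ici t)) (𝓝 (ζ t)) := hζ.1.1 t ht
  have hmass : Tendsto (fun s => (((ζ s).mass : ℝ≥0) : ℝ)) (nhdsWithin t (Set.Ici t))
      (𝓝 (((ζ t).mass : ℝ≥0) : ℝ)) :=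
    (NNReal.continuous_coe.tendsto _).comp ((FiniteMeasure.continuous_mass.tendsto _).comp h1)
  have key : ∀ s ∈ Set.Ici t,
      ((ζ t B : ℝ≥0):ℝ) ≤ ((ζ s B : ℝ≥0):ℝ) ∧
      ((ζ s B : ℝ≥0):ℝ) ≤ ((ζ t B : ℝ≥0):ℝ) + ((((ζ s).mass : ℝ≥0):ℝ) - (((ζ t).mass : ℝ≥0):ℝ)) := by
    intro s hs
    have hs' : t ≤ s := hs
    have l1 : ((ζ t B : ℝ≥0):ℝ) ≤ ζ s B := fm_coe_le (hm ht hs')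
    have l2 : ((ζ t Bᶜ : ℝ≥0):ℝ) ≤ ζ s Bᶜ := fm_coe_le (hmc ht hs')
    have m1 : (((ζ s).mass : ℝ≥0):ℝ) = ((ζ s B : ℝ≥0):ℝ) + ((ζ s Bᶜ : ℝ≥0):ℝ) := by
      rw [FiniteMeasure.mass, ← Set.union_compl_self B]
      exact fm_union (ζ s) disjoint_compl_right hBm.compl
    have m2 : (((ζ t).mass : ℝ≥0):ℝ) = ((ζ t B : ℝ≥0):ℝ) + ((ζ t Bᶜ : ℝ≥0):ℝ) := by
      rw [FiniteMeasure.mass, ← Set.union_compl_self B]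
      exact fm_union (ζ t) disjoint_compl_right hBm.compl
    exact ⟨l1, by linarith⟩
  have hup : Tendsto (fun s => ((ζ t B : ℝ≥0):ℝ) + ((((ζ s).mass : ℝ≥0):ℝ) - (((ζ t).mass : ℝ≥0):ℝ)))
      (nhdsWithin t (Set.Ici t)) (𝓝 (((ζ t B : ℝ≥0):ℝ))) := by
    have := ((hmass.sub_const (((ζ t).mass : ℝ≥0):ℝ)).const_add (((ζ t B : ℝ≥0):ℝ)))
    simpa using this
  refine tendsto_of_tendsto_of_tendsto_of_le_of_le' tendsto_const_nhds hup ?_ ?_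
  · filter_upwards [self_mem_nhdsWithin] with s hs
    exact (key s hs).1
  · filter_upwards [self_mem_nhdsWithin] with s hs
    exact (key s hs).2

end MVSPAux
namespace MVSPAux

open Set Filter MeasureTheory Function

/-- The running maximum `sup_{s∈[0,t]} (−ψ(s)) ∨ 0`. -/
def Mfun (ψ : ℝ → ℝ) (t : ℝ) : ℝ := sSup ((fun s => max (-ψ s) 0) '' Set.Icc 0 t)

lemma gamma1_eq (ψ : ℝ → ℝ) (t : ℝ) : Gamma1 ψ t = ψ t + Mfun ψ t := by
  unfold Gamma1 Mfun
  rw [Real.sInf_def]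
  have himg : -((fun s => min (ψ s) 0) '' Set.Icc 0 t)
      = (fun s => max (-ψ s) 0) '' Set.Icc 0 t := by
    ext y
    simp only [Set.mem_neg, Set.mem_image]
    constructor
    · rintro ⟨s, hs, hmin⟩
      refine ⟨s, hs, ?_⟩
      have : max (-ψ s) 0 = -min (ψ s) 0 := by
        rcases le_total (ψ s) 0 with h | h
        · rw [min_eq_left h, max_eq_left (by linarith)]
        · rw [min_eq_right h, max_eq_right (by linarith), neg_zero]
      rw [this, hmin, neg_neg]
    · rintro ⟨s, hs, hmax⟩
      refine ⟨s, hs, ?_⟩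
      have : max (-ψ s) 0 = -min (ψ s) 0 := by
        rcases le_total (ψ s) 0 with h | h
        · rw [min_eq_left h, max_eq_left (by linarith)]
        · rw [min_eq_right h, max_eq_right (by linarith), neg_zero]
      rw [this] at hmax
      linarith [hmax]
  rw [himg]
  ring

lemma core1 (ψ φ η : ℝ → ℝ) (hN : Nice η)
    (hφη : ∀ u, 0 ≤ u → φ u = ψ u + η u)
    (hφ0 : ∀ u, 0 ≤ u → 0 ≤ φ u)
    (hae : hN.stj.measure {u | φ u ≠ 0} = 0) :
    ∀ t, 0 ≤ t → η t = Mfun ψ t := by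
  intro t ht
  have hmono := hN.monoOn
  have hev : ∀ u, 0 ≤ u → -ψ u ≤ η u := by
    intro u hu
    have h2 := hφ0 u hu
    rw [hφη u hu] at h2; linarith
  have hKne : ((fun s => max (-ψ s) 0) '' Set.Icc 0 t).Nonempty :=
    ⟨_, Set.mem_image_of_mem _ (Set.left_mem_Icc.2 ht)⟩
  have hKub : ∀ y ∈ (fun s => max (-ψ s) 0) '' Set.Icc 0 t, y ≤ η t := by
    rintro y ⟨s, hs, rfl⟩
    exact max_le (le_trans (hev s hs.1) (hmono hs.1 ht hs.2)) (hN.nonneg ht)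
  have hKbdd : BddAbove ((fun s => max (-ψ s) 0) '' Set.Icc 0 t) := ⟨η t, hKub⟩
  have hle : Mfun ψ t ≤ η t := csSup_le hKne hKub
  refine le_antisymm ?_ hle
  by_contra hcon
  push_neg at hcon
  set c := Mfun ψ t with hc
  have hcmem : ∀ s, s ∈ Set.Icc 0 t → max (-ψ s) 0 ≤ c := fun s hs =>
    le_csSup hKbdd (Set.mem_image_of_mem _ hs)
  have hc0 : (0:ℝ) ≤ c := le_trans (le_max_right _ _) (hcmem 0 (Set.left_mem_Icc.2 ht))
  have hzero : ∀ s : Set ℝ, hN.stj.measure s ≠ 0 → ∃ u ∈ s, φ u = 0 := by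
    intro s hs
    by_contra hcon2
    push_neg at hcon2
    exact hs (measure_mono_null (fun u hu => hcon2 u hu) hae)
  by_cases h0 : η 0 ≤ c
  · set S := {s : ℝ | s ∈ Set.Icc 0 t ∧ η s ≤ c} with hS
    have hSne : S.Nonempty := ⟨0, Set.left_mem_Icc.2 ht, h0⟩
    have hSbdd : BddAbove S := ⟨t, fun s hs => hs.1.2⟩
    set τ := sSup S with hτ
    have hτmem : τ ∈ Set.Icc 0 t :=
      ⟨le_csSup hSbdd ⟨Set.left_mem_Icc.2 ht, h0⟩, csSup_le hSne fun s hs => hs.1.2⟩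
    have hkey : ∀ s, 0 ≤ s → s < τ → η s ≤ c := by
      intro s hs0 hsτ
      by_contra hgt
      push_neg at hgt
      have hτs : τ ≤ s := csSup_le hSne (fun s' hs' => by
        by_contra hs'2
        push_neg at hs'2
        exact absurd hs'.2 (not_le.2 (lt_of_lt_of_le hgt (hmono hs0 hs'.1.1 hs'2.le))))
      exact absurd hsτ (not_lt.2 hτs)
    by_cases hτc : η τ ≤ c
    · have hpos : hN.stj.measure (Set.Ioc τ t) ≠ 0 := by
        rw [hN.measure_Ioc', lsExt_of_nonneg η ht, lsExt_of_nonneg η hτmem.1]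
        simp only [ne_eq, ENNReal.ofReal_eq_zero, not_le]
        linarith
      obtain ⟨u, hu, hφu⟩ := hzero _ hpos
      have hu0 : (0:ℝ) ≤ u := le_trans hτmem.1 hu.1.le
      have h1 : η u = -ψ u := by
        have := hφη u hu0; rw [hφu] at this; linarith
      have h2 : η u ≤ c := by
        rw [h1] at *
        exact le_trans (le_max_left _ _) (hcmem u ⟨hu0, hu.2⟩)
      have h3 : c < η u := by
        by_contra hle2
        push_neg at hle2
        have hmem : u ∈ S := ⟨⟨hu0, hu.2⟩, hle2⟩
        exact absurd (le_csSup hSbdd hmem) (not_le.2 hu.1)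
      linarith
    · push_neg at hτc
      have hll : Function.leftLim (lsExt η) τ ≤ c := by
        rw [Monotone.leftLim_eq_sSup hN.1]
        refine csSup_le ⟨lsExt η (τ - 1), Set.mem_image_of_mem _ (by simp)⟩ ?_
        rintro y ⟨s, hs, rfl⟩
        rcases lt_or_ge s 0 with h | h
        · rw [lsExt_of_neg η h]; exact hc0
        · rw [lsExt_of_nonneg η h]; exact hkey s h hs
      have hpos : hN.stj.measure {τ} ≠ 0 := by
        rw [hN.measure_singleton', lsExt_of_nonneg η hτmem.1]
        simp only [ne_eq, ENNReal.ofReal_eq_zero, not_le]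
        linarith
      obtain ⟨u, hu, hφu⟩ := hzero _ hpos
      rw [Set.mem_singleton_iff] at hu
      rw [hu] at hφu
      have h1 : η τ = -ψ τ := by
        have := hφη τ hτmem.1; rw [hφu] at this; linarith
      have h2 : η τ ≤ c := by
        rw [h1]
        exact le_trans (le_max_left _ _) (hcmem τ hτmem)
      linarith
  · push_neg at h0
    have hpos : hN.stj.measure {0} ≠ 0 := by
      rw [hN.measure_singleton', hN.leftLim_of_nonpos le_rfl, lsExt_of_nonneg η le_rfl]
      simp only [ne_eq, ENNReal.ofReal_eq_zero, not_le]
      linarith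
    obtain ⟨u, hu, hφu⟩ := hzero _ hpos
    rw [Set.mem_singleton_iff] at hu
    rw [hu] at hφu
    have h1 : η 0 = -ψ 0 := by
      have := hφη 0 le_rfl; rw [hφu] at this; linarith
    have h2 : η 0 ≤ c := by
      rw [h1]
      exact le_trans (le_max_left _ _) (hcmem 0 (Set.left_mem_Icc.2 ht))
    linarith

end MVSPAux
namespace MVSPAux

open Set Filter MeasureTheory Function

lemma core2 (ψ φ η : ℝ → ℝ) (hN : Nice η)
    (hψ : ∀ t, 0 ≤ t → ContinuousWithinAt ψ (Set.Ici t) t)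
    (hbdd : ∀ t, 0 ≤ t → BddAbove ((fun s => max (-ψ s) 0) '' Set.Icc 0 t))
    (hφη : ∀ u, 0 ≤ u → φ u = ψ u + η u)
    (hform : ∀ t, 0 ≤ t → η t = Mfun ψ t) :
    hN.stj.measure {u | φ u ≠ 0} = 0 := by
  have hmono := hN.monoOn
  have hMle : ∀ u s : ℝ, 0 ≤ s → s ≤ u → max (-ψ s) 0 ≤ η u := by
    intro u s hs hsu
    rw [hform u (hs.trans hsu)]
    exact le_csSup (hbdd u (hs.trans hsu)) (Set.mem_image_of_mem _ ⟨hs, hsu⟩)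
  have hφ0 : ∀ u, 0 ≤ u → 0 ≤ φ u := by
    intro u hu
    have h1 := le_trans (le_max_left _ _) (hMle u u hu le_rfl)
    rw [hφη u hu]; linarith
  -- Step A: no jump at points where φ > 0
  have hA : ∀ u : ℝ, 0 ≤ u → 0 < φ u → Function.leftLim (lsExt η) u = lsExt η u := by
    intro u hu hφu
    have hLle : Function.leftLim (lsExt η) u ≤ lsExt η u := Monotone.leftLim_le hN.1 le_rfl
    refine le_antisymm hLle ?_
    set L := Function.leftLim (lsExt η) u with hL
    have hL0 : (0:ℝ) ≤ L := by
      have h1 := Monotone.le_leftLim hN.1 (show u - 1 < u by linarith)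
      have h2 : 0 ≤ lsExt η (u-1) := by
        rcases lt_or_ge (u-1) 0 with hc | hc
        · rw [lsExt_of_neg _ hc]
        · rw [lsExt_of_nonneg _ hc]; exact hN.nonneg hc
      linarith
    have hsle : ∀ s, 0 ≤ s → s < u → max (-ψ s) 0 ≤ L := by
      intro s hs hsu
      calc max (-ψ s) 0 ≤ η s := hMle s s hs le_rfl
        _ = lsExt η s := (lsExt_of_nonneg η hs).symm
        _ ≤ L := Monotone.le_leftLim hN.1 hsu
    have hsup : η u ≤ max L (max (-ψ u) 0) := by
      rw [hform u hu]
      refine csSup_le ⟨_, Set.mem_image_of_mem _ (Set.left_mem_Icc.2 hu)⟩ ?_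
      rintro y ⟨s, hs, rfl⟩
      rcases lt_or_eq_of_le hs.2 with h | h
      · exact le_trans (hsle s hs.1 h) (le_max_left _ _)
      · rw [h]; exact le_max_right _ _
    rw [lsExt_of_nonneg η hu]
    by_contra hlt
    push_neg at hlt
    have h1 : η u ≤ max (-ψ u) 0 := by
      rcases le_max_iff.1 hsup with h | h
      · linarith
      · exact h
    have h2 : η u = max (-ψ u) 0 := le_antisymm h1 (hMle u u hu le_rfl)
    rcases max_cases (-ψ u) 0 with ⟨he, _⟩ | ⟨he, _⟩
    · rw [he] at h2
      have := hφη u hu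
      linarith
    · rw [he] at h2
      linarith
  -- Step B: right local constancy at points where φ > 0
  have hB : ∀ u : ℝ, 0 ≤ u → 0 < φ u → ∃ δ > 0, η (u + δ) = η u := by
    intro u hu hφu
    have hηc : ContinuousWithinAt η (Set.Ici u) u :=
      (hN.2 u).congr (fun s hs => (lsExt_of_nonneg η (le_trans hu hs)).symm)
        (lsExt_of_nonneg η hu).symm
    have hφc : ContinuousWithinAt φ (Set.Ici u) u :=
      ((hψ u hu).add hηc).congr (fun s hs => hφη s (le_trans hu hs)) (hφη u hu)
    have hev : φ ⁻¹' {x | φ u / 2 < x} ∈ nhdsWithin u (Set.Ici u) :=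
      hφc (lt_mem_nhds (by linarith))
    obtain ⟨v, huv, hsub⟩ := mem_nhdsGE_iff_exists_Icc_subset.1 hev
    have hv0 : (0:ℝ) ≤ v := le_trans hu huv.le
    refine ⟨v - u, by linarith, ?_⟩
    have hvv : u + (v - u) = v := by ring
    rw [hvv]
    refine le_antisymm ?_ (hmono hu hv0 huv.le)
    have hη0 : (0:ℝ) ≤ η u := hN.nonneg hu
    by_contra hgt
    push_neg at hgt
    have hε : (0:ℝ) < φ u / 2 := by linarith
    have hD : Mfun ψ v ≤ max (η u) (η v - φ u / 2) := by
      refine csSup_le ⟨_, Set.mem_image_of_mem _ (Set.left_mem_Icc.2 hv0)⟩ ?_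
      rintro y ⟨s, hs, rfl⟩
      rcases le_or_gt s u with h | h
      · exact le_trans (hMle u s hs.1 h) (le_max_left _ _)
      · have hφs : φ u / 2 < φ s := hsub ⟨h.le, hs.2⟩
        have hs0 : (0:ℝ) ≤ s := le_trans hu h.le
        have h1 : φ s = ψ s + η s := hφη s hs0
        have h2 : η s ≤ η v := hmono hs0 hv0 hs.2
        refine max_le (le_trans (show -ψ s ≤ η v - φ u / 2 by linarith) (le_max_right (η u) _))
          (le_trans hη0 (le_max_left _ _))
    have hD' : η v ≤ max (η u) (η v - φ u / 2) := le_trans (le_of_eq (hform v hv0)) hD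
    rcases le_max_iff.1 hD' with h | h
    · linarith
    · linarith
  -- Step C: assemble
  have hsub : {u : ℝ | φ u ≠ 0} ⊆ Set.Iio 0 ∪ {u : ℝ | 0 ≤ u ∧ 0 < φ u} := by
    intro u hu
    rcases lt_or_ge u 0 with h | h
    · exact Or.inl h
    · exact Or.inr ⟨h, lt_of_le_of_ne (hφ0 u h) (Ne.symm hu)⟩
  refine measure_mono_null hsub (measure_union_null hN.measure_Iio_zero ?_)
  set N := {u : ℝ | 0 ≤ u ∧ 0 < φ u} with hNdef
  have hδ' : ∀ u : ℝ, u ∈ N → ∃ δ, 0 < δ ∧ η (u + δ) = η u := by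
    intro u hu
    obtain ⟨δ, hδ1, hδ2⟩ := hB u hu.1 hu.2
    exact ⟨δ, hδ1, hδ2⟩
  choose! δ hδpos hδconst using hδ'
  have hIoonull : ∀ u ∈ N, hN.stj.measure (Set.Ioo u (u + δ u)) = 0 := by
    intro u hu
    refine measure_mono_null Set.Ioo_subset_Ioc_self ?_
    rw [hN.measure_Ioc', lsExt_of_nonneg η (by linarith [hδpos u hu, hu.1]),
      lsExt_of_nonneg η hu.1, hδconst u hu]
    simp
  set U := ⋃ u ∈ N, Set.Ioo u (u + δ u) with hU
  have hUnull : hN.stj.measure U = 0 := by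
    obtain ⟨T, hTc, hTU⟩ := TopologicalSpace.isOpen_iUnion_countable
      (fun u : N => Set.Ioo u.1 (u.1 + δ u.1)) (fun u => isOpen_Ioo)
    have hUeq : U = ⋃ u ∈ T, Set.Ioo u.1 (u.1 + δ u.1) := by
      rw [hU, hTU, Set.biUnion_eq_iUnion]
    rw [hUeq, measure_biUnion_null_iff hTc]
    exact fun u _ => hIoonull u.1 u.2
  -- the leftover set is countable, and each singleton is null
  have hqex : ∀ u ∈ N \ U, ∃ q : ℚ, u < (q:ℝ) ∧ (q:ℝ) < u + δ u := by
    intro u hu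
    exact exists_rat_btwn (by linarith [hδpos u hu.1])
  choose! q hq1 hq2 using hqex
  have hsep : ∀ a ∈ N \ U, ∀ b ∈ N \ U, a < b → (q a : ℝ) < q b := by
    intro a ha b hb hab
    have hbmem : b ∉ Set.Ioo a (a + δ a) := by
      intro hmem
      exact hb.2 (Set.mem_biUnion ha.1 hmem)
    have hge : a + δ a ≤ b := (by simpa [Set.mem_Ioo] using hbmem : a < b → a + δ a ≤ b) hab
    exact lt_trans (hq2 a ha) (lt_of_le_of_lt hge (hq1 b hb))
  have hinj : Set.InjOn q (N \ U) := by
    intro a ha b hb hab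
    rcases lt_trichotomy a b with h | h | h
    · exact absurd (hsep a ha b hb h) (by rw [hab]; exact lt_irrefl _)
    · exact h
    · exact absurd (hsep b hb a ha h) (by rw [hab]; exact lt_irrefl _)
  have hcount : Set.Countable (N \ U) :=
    Set.countable_of_injective_of_countable_image hinj (Set.to_countable _)
  have hNUnull : hN.stj.measure (N \ U) = 0 := by
    rw [← Set.biUnion_of_singleton (N \ U), measure_biUnion_null_iff hcount]
    intro u hu
    rw [hN.measure_singleton', hA u hu.1.1 hu.1.2]
    simp
  refine measure_mono_null (fun u hu => ?_) (measure_union_null hUnull hNUnull)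
  by_cases h : u ∈ U
  · exact Or.inl h
  · exact Or.inr ⟨hu, h⟩

end MVSPAux
/-- Characterization of the MVSP in terms of the Skorokhod map on the
half-line: `(ξ,β,ι)` solves the MVSP for `(α,μ)` iff
`(ξ[0,x], β((x,∞)) + ι) = Γ[α[0,x] − μ]` for every `x ≥ 0` and
`β({0}) = α({0}) − ξ({0})`. -/
theorem mvsp_iff_skorokhod
    (α ξ β : ℝ → FiniteMeasure ℝ≥0) (μ ι : ℝ → ℝ)
    (hα : DMup α) (hμ : DRup μ) (hξ : DM ξ) (hβ : DMup β) (hι : DRup ι) :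
    SolvesMVSP α μ ξ β ι ↔
      ((∀ x : ℝ≥0, ∀ t : ℝ, 0 ≤ t →
          (ξ t (Set.Iic x) : ℝ) = Gamma1 (fun s => (α s (Set.Iic x) : ℝ) - μ s) t ∧
          (β t (Set.Ioi x) : ℝ) + ι t = Gamma2 (fun s => (α s (Set.Iic x) : ℝ) - μ s) t) ∧
       (∀ t : ℝ, 0 ≤ t →
          (β t ({0} : Set ℝ≥0) : ℝ) = (α t ({0} : Set ℝ≥0) : ℝ) - (ξ t ({0} : Set ℝ≥0) : ℝ))) := by
  classical
  have hb_nice : ∀ x : ℝ≥0, MVSPAux.Nice (fun s => ((β s (Set.Ioi x) : ℝ≥0) : ℝ)) := by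
    intro x
    refine MVSPAux.nice_of _ (fun t _ => NNReal.coe_nonneg _) ?_ ?_
    · intro a ha b hb hab
      exact MVSPAux.fm_coe_le (MVSPAux.mono_Ioi hβ ha hab x)
    · intro t ht
      refine MVSPAux.rc_apply hβ ht measurableSet_Ioi
        (fun s u hs hsu => MVSPAux.mono_Ioi hβ hs hsu x) ?_
      intro s u hs hsu
      rw [Set.compl_Ioi]
      exact MVSPAux.mono_closed hβ hs hsu isClosed_Iic
  have hι_nice : MVSPAux.Nice ι := MVSPAux.nice_of _ hι.2.1 hι.2.2 (fun t ht => hι.1.1 t ht)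
  have hη_nice : ∀ x : ℝ≥0, MVSPAux.Nice (fun s => ((β s (Set.Ioi x) : ℝ≥0) : ℝ) + ι s) :=
    fun x => (hb_nice x).add hι_nice
  have hψ_rc : ∀ (x : ℝ≥0) (t : ℝ), 0 ≤ t →
      ContinuousWithinAt (fun s => ((α s (Set.Iic x) : ℝ≥0) : ℝ) - μ s) (Set.Ici t) t := by
    intro x t ht
    refine ContinuousWithinAt.sub ?_ (hμ.1.1 t ht)
    refine MVSPAux.rc_apply hα ht measurableSet_Iic
      (fun s u hs hsu => MVSPAux.mono_closed hα hs hsu isClosed_Iic) ?_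
    intro s u hs hsu
    rw [Set.compl_Iic]
    exact MVSPAux.mono_Ioi hα hs hsu x
  have hbdd : ∀ (x : ℝ≥0) (t : ℝ), 0 ≤ t →
      BddAbove ((fun s => max (-(((α s (Set.Iic x) : ℝ≥0) : ℝ) - μ s)) 0) '' Set.Icc 0 t) := by
    intro x t ht
    refine ⟨max (μ t) 0, ?_⟩
    rintro y ⟨s, hs, rfl⟩
    have h1 : μ s ≤ μ t := hμ.2.2 hs.1 ht hs.2
    have h2 : (0:ℝ) ≤ ((α s (Set.Iic x) : ℝ≥0) : ℝ) := NNReal.coe_nonneg _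
    exact max_le_max (by linarith) le_rfl
  have hadd : ∀ x : ℝ≥0,
      lsMeasure (fun s => ((β s (Set.Ioi x) : ℝ≥0) : ℝ) + ι s)
        = lsMeasure (fun s => ((β s (Set.Ioi x) : ℝ≥0) : ℝ)) + lsMeasure ι :=
    fun x => MVSPAux.lsMeasure_add (hb_nice x) hι_nice
  have hIic0 : (Set.Iic (0:ℝ≥0)) = ({0} : Set ℝ≥0) := by
    ext y; simp [Set.mem_Iic, le_zero_iff]
  have hunion : ({0} : Set ℝ≥0) ∪ Set.Ioi 0 = Set.univ := by
    ext y
    simp only [Set.mem_union, Set.mem_singleton_iff, Set.mem_Ioi, Set.mem_univ, iff_true]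
    exact (eq_zero_or_pos y).imp id id
  have hdisj : Disjoint ({0} : Set ℝ≥0) (Set.Ioi 0) := by
    simp [Set.disjoint_left]
  have hsplit : ∀ t : ℝ, ((β t Set.univ : ℝ≥0) : ℝ)
      = ((β t ({0}:Set ℝ≥0) : ℝ≥0) : ℝ) + ((β t (Set.Ioi (0:ℝ≥0)) : ℝ≥0) : ℝ) := by
    intro t
    rw [← hunion]
    exact MVSPAux.fm_union (β t) hdisj measurableSet_Ioi
  constructor
  · rintro ⟨h1, h2, h3, h4⟩
    have hcore : ∀ (x : ℝ≥0) (t : ℝ), 0 ≤ t →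
        ((β t (Set.Ioi x) : ℝ≥0) : ℝ) + ι t
          = MVSPAux.Mfun (fun s => ((α s (Set.Iic x) : ℝ≥0) : ℝ) - μ s) t := by
      intro x
      refine MVSPAux.core1 _ (fun s => ((ξ s (Set.Iic x) : ℝ≥0) : ℝ)) _ (hη_nice x)
        (fun u hu => by have := h1 x u hu; linarith) (fun u hu => NNReal.coe_nonneg _) ?_
      rw [← MVSPAux.lsMeasure_eq (hη_nice x), hadd x, Measure.add_apply]
      have h2' := ae_iff.1 (h2 x)
      have h3' := ae_iff.1 (h3 x)
      simp only [ne_eq]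
      rw [h2', h3', add_zero]
    refine ⟨?_, ?_⟩
    · intro x t ht
      have hη := hcore x t ht
      have hξ1 := h1 x t ht
      have hg : Gamma1 (fun s => ((α s (Set.Iic x) : ℝ≥0) : ℝ) - μ s) t
          = (((α t (Set.Iic x) : ℝ≥0) : ℝ) - μ t)
            + MVSPAux.Mfun (fun s => ((α s (Set.Iic x) : ℝ≥0) : ℝ) - μ s) t :=
        MVSPAux.gamma1_eq _ t
      constructor
      · rw [hg]; linarith
      · rw [Gamma2, hg]; linarith
    · intro t ht
      have h10 := h1 0 t ht
      have h4t := h4 t ht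
      rw [hIic0] at h10
      have hs := hsplit t
      linarith
  · rintro ⟨hG, h0⟩
    have h1 : ∀ (x : ℝ≥0) (t : ℝ), 0 ≤ t →
        ((ξ t (Set.Iic x) : ℝ≥0) : ℝ)
          = ((α t (Set.Iic x) : ℝ≥0) : ℝ) - μ t + ((β t (Set.Ioi x) : ℝ≥0) : ℝ) + ι t := by
      intro x t ht
      have hA := (hG x t ht).1
      have hB := (hG x t ht).2
      rw [Gamma2] at hB
      linarith
    have hMeq : ∀ (x : ℝ≥0) (t : ℝ), 0 ≤ t →
        ((β t (Set.Ioi x) : ℝ≥0) : ℝ) + ι t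
          = MVSPAux.Mfun (fun s => ((α s (Set.Iic x) : ℝ≥0) : ℝ) - μ s) t := by
      intro x t ht
      have hB := (hG x t ht).2
      rw [Gamma2] at hB
      have hg : Gamma1 (fun s => ((α s (Set.Iic x) : ℝ≥0) : ℝ) - μ s) t
          = (((α t (Set.Iic x) : ℝ≥0) : ℝ) - μ t)
            + MVSPAux.Mfun (fun s => ((α s (Set.Iic x) : ℝ≥0) : ℝ) - μ s) t :=
        MVSPAux.gamma1_eq _ t
      linarith
    have hnull : ∀ x : ℝ≥0,
        lsMeasure (fun s => ((β s (Set.Ioi x) : ℝ≥0) : ℝ))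
            {u | ¬ ((ξ u (Set.Iic x) : ℝ≥0) : ℝ) = 0} = 0
        ∧ lsMeasure ι {u | ¬ ((ξ u (Set.Iic x) : ℝ≥0) : ℝ) = 0} = 0 := by
      intro x
      have hc := MVSPAux.core2 _ (fun s => ((ξ s (Set.Iic x) : ℝ≥0) : ℝ)) _ (hη_nice x)
        (hψ_rc x) (hbdd x) (fun u hu => by have := h1 x u hu; linarith) (hMeq x)
      rw [← MVSPAux.lsMeasure_eq (hη_nice x), hadd x, Measure.add_apply] at hc
      simp only [ne_eq] at hc
      exact ⟨(add_eq_zero.1 hc).1, (add_eq_zero.1 hc).2⟩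
    refine ⟨fun x t ht => h1 x t ht, ?_, ?_, ?_⟩
    · intro x
      rw [ae_iff]
      exact (hnull x).1
    · intro x
      rw [ae_iff]
      exact (hnull x).2
    · intro t ht
      have h10 := h1 0 t ht
      rw [hIic0] at h10
      have hs := hsplit t
      have hb := h0 t ht
      linarith

end
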